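/- For each n, let P_n(z) = a_n∏_{k=1}^n (z − α_{k,n}) be a polynomial of degree exactly n with integer coefficients and simple zeros. Assume: (i) lim_{n→∞} |a_n|^{1/n} = 1; (ii') there exists a single R > 1 such that lim_{n→∞} (∏_{k : |α_{k,n}| ≥ R} |α_{k,n}|)^{1/n} = 1; and (iii) for every continuous compactly supported φ : ℂ → ℝ, (1/n)∑_{k=1}^n φ(α_{k,n}) → ∫ φ dμ_D. Then lim_{n→∞} M(P_n)^{1/n} = 1. -/

import Mathlib

open Polynomial Filter Real Topology
open scoped Classical

/-- The multiset of complex roots of an integer polynomial. -/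
noncomputable def croots (P : Polynomial ℤ) : Multiset ℂ :=
  (P.map (Int.castRingHom ℂ)).roots

/-- Integral of `φ` against the normalized arclength measure on the unit circle. -/
noncomputable def circleAvg (φ : ℂ → ℝ) : ℝ :=
  (2 * Real.pi)⁻¹ * ∫ t in (0:ℝ)..(2 * Real.pi), φ (Complex.exp (t * Complex.I))

/-- Mahler measure of an integer polynomial: `|a_n| ∏ max(1,|α_k|)`. -/
noncomputable def mahlerMeas (P : Polynomial ℤ) : ℝ :=
  |(P.leadingCoeff : ℝ)| * ((croots P).map (fun α => max 1 (‖α‖))).prod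

/-- The product `∏_{k : |α_k| ≥ R} |α_k|` over the roots of `P` (empty product = 1). -/
noncomputable def tailProd (P : Polynomial ℤ) (R : ℝ) : ℝ :=
  ((croots P).map (fun α => if R ≤ ‖α‖ then ‖α‖ else 1)).prod

lemma prod_map_rpow (R : ℝ) (hR : 0 < R) (m : Multiset ℂ) (e : ℂ → ℝ) :
    (m.map (fun a => R ^ (e a))).prod = R ^ ((m.map e).sum) := by
  induction m using Multiset.induction_on with
  | empty => simp
  | cons a s ih => simp [ih, Real.rpow_add hR]

lemma croots_card (P : Polynomial ℤ) (n : ℕ) (h : P.degree = n) :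
    Multiset.card (croots P) = n := by
  unfold croots
  have hdm : (P.map (Int.castRingHom ℂ)).degree = (n : WithBot ℕ) := by
    rw [Polynomial.degree_map_eq_of_injective (RingHom.injective_int _)]; exact h
  have hnd : (P.map (Int.castRingHom ℂ)).natDegree = n :=
    Polynomial.natDegree_eq_of_degree_eq_some hdm
  rw [← hnd]
  exact Polynomial.splits_iff_card_roots.mp (IsAlgClosed.splits _)

theorem stmt_3 (P : ℕ → Polynomial ℤ)
    (hdeg : ∀ n, (P n).degree = n)
    (hsimple : ∀ n, (croots (P n)).Nodup)
    (hlead : Tendsto (fun n => |((P n).leadingCoeff : ℝ)| ^ ((1 : ℝ) / n)) atTop (𝓝 1))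
    (htail : ∃ R : ℝ, 1 < R ∧
      Tendsto (fun n => tailProd (P n) R ^ ((1 : ℝ) / n)) atTop (𝓝 1))
    (hweak : ∀ φ : ℂ → ℝ, Continuous φ → HasCompactSupport φ →
      Tendsto (fun n => ((croots (P n)).map φ).sum / (n : ℝ)) atTop (𝓝 (circleAvg φ))) :
    Tendsto (fun n => mahlerMeas (P n) ^ ((1 : ℝ) / n)) atTop (𝓝 1) := by
  obtain ⟨R, hR1, hRt⟩ := htail
  have hR0 : (0:ℝ) < R := lt_trans one_pos hR1
  -- basic facts
  have hPne : ∀ n, (P n) ≠ 0 := by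
    intro n h
    have := hdeg n
    rw [h, Polynomial.degree_zero] at this
    simp at this
  have hlc : ∀ n, (P n).leadingCoeff ≠ 0 := fun n => Polynomial.leadingCoeff_ne_zero.mpr (hPne n)
  have halead : ∀ n, (1:ℝ) ≤ |((P n).leadingCoeff : ℝ)| := by
    intro n
    have h1 : (1:ℤ) ≤ |(P n).leadingCoeff| := Int.one_le_abs (hlc n)
    calc (1:ℝ) = ((1:ℤ):ℝ) := by norm_num
    _ ≤ ((|(P n).leadingCoeff| : ℤ) : ℝ) := by exact_mod_cast h1
    _ = |((P n).leadingCoeff : ℝ)| := by push_cast; ring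
  have hcard : ∀ n, Multiset.card (croots (P n)) = n := fun n => croots_card _ n (hdeg n)
  -- lower bound: 1 ≤ mahlerMeas
  have hmge : ∀ n, 1 ≤ mahlerMeas (P n) := by
    intro n
    unfold mahlerMeas
    have h2 : (1:ℝ) ≤ ((croots (P n)).map (fun α => max 1 (‖α‖))).prod := by
      apply Multiset.one_le_prod
      intro x hx
      obtain ⟨a, _, rfl⟩ := Multiset.mem_map.mp hx
      exact le_max_left _ _
    nlinarith [halead n]
  have hge : ∀ n : ℕ, 1 ≤ mahlerMeas (P n) ^ ((1:ℝ)/n) := by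
    intro n
    calc (1:ℝ) = (1:ℝ) ^ ((1:ℝ)/n) := (Real.one_rpow _).symm
    _ ≤ _ := Real.rpow_le_rpow zero_le_one (hmge n) (by positivity)
  rw [Metric.tendsto_nhds]
  intro ε hε
  set δ : ℝ := ε/2 with hδdef
  have hδ : 0 < δ := by positivity
  -- the test function
  set f : ℝ → ℝ := fun x => max 0 (min (min ((x-1)*(2/δ)-1) 1) (R+1-x)) with hfdef
  set φ : ℂ → ℝ := fun z => f (‖z‖) with hφdef
  have hfcont : Continuous f := by
    apply continuous_const.max
    exact (((continuous_id.sub continuous_const).mul continuous_const).sub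
      continuous_const).min continuous_const |>.min (continuous_const.sub continuous_id)
  have hφcont : Continuous φ := hfcont.comp continuous_norm
  have hφ0 : ∀ z, 0 ≤ φ z := fun z => le_max_left _ _
  have hφsupp : HasCompactSupport φ := by
    apply HasCompactSupport.intro (isCompact_closedBall (0:ℂ) (R+1))
    intro x hx
    have hxa : R + 1 < ‖x‖ := by
      simp only [Metric.mem_closedBall, Complex.dist_eq, sub_zero, not_le] at hx
      exact hx
    show max 0 _ = 0
    apply max_eq_left
    calc min (min ((‖x‖ - 1)*(2/δ)-1) 1) (R+1-‖x‖)
        ≤ R + 1 - ‖x‖ := min_le_right _ _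
    _ ≤ 0 := by linarith
  have hφcircle : circleAvg φ = 0 := by
    unfold circleAvg
    have h0 : ∀ t : ℝ, φ (Complex.exp (t * Complex.I)) = 0 := by
      intro t
      show max 0 _ = 0
      rw [Complex.norm_exp_ofReal_mul_I]
      apply max_eq_left
      calc min (min ((1 - 1)*(2/δ)-1) 1) (R+1-1)
          ≤ min ((1 - 1)*(2/δ)-1) 1 := min_le_left _ _
      _ ≤ (1 - 1)*(2/δ)-1 := min_le_left _ _
      _ ≤ 0 := by ring_nf; norm_num
    simp only [h0, intervalIntegral.integral_zero, mul_zero]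
  have hφsum := hweak φ hφcont hφsupp
  rw [hφcircle] at hφsum
  -- indicator of the annulus
  set e : ℂ → ℝ := fun a => if 1+δ ≤ ‖a‖ ∧ ‖a‖ < R then 1 else 0 with hedef
  have heφ : ∀ a, e a ≤ φ a := by
    intro a
    by_cases h : 1+δ ≤ ‖a‖ ∧ ‖a‖ < R
    · simp only [hedef, if_pos h]
      show (1:ℝ) ≤ max 0 _
      refine le_trans ?_ (le_max_right _ _)
      set x := ‖a‖
      have hA : (1:ℝ) ≤ (x-1)*(2/δ)-1 := by
        have hmul : δ * (2/δ) = 2 := by field_simp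
        nlinarith [mul_le_mul_of_nonneg_right (show δ ≤ x - 1 by linarith [h.1])
          (show (0:ℝ) ≤ 2/δ by positivity)]
      exact le_min (le_min hA le_rfl) (by linarith [h.2])
    · simp only [hedef, if_neg h]
      exact hφ0 a
  set S : ℕ → ℝ := fun n => ((croots (P n)).map e).sum with hSdef
  have hS0 : ∀ n, 0 ≤ S n := by
    intro n
    apply Multiset.sum_nonneg
    intro x hx
    obtain ⟨a, _, rfl⟩ := Multiset.mem_map.mp hx
    simp only [hedef]
    split_ifs <;> norm_num
  have hSle : ∀ n, S n ≤ ((croots (P n)).map φ).sum := fun n =>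
    Multiset.sum_map_le_sum_map e φ (fun a _ => heφ a)
  have hSlim : Tendsto (fun n => S n * ((1:ℝ)/n)) atTop (𝓝 0) := by
    have h : Tendsto (fun n : ℕ => S n / n) atTop (𝓝 0) :=
      tendsto_of_tendsto_of_tendsto_of_le_of_le tendsto_const_nhds hφsum
        (fun n => div_nonneg (hS0 n) (Nat.cast_nonneg n))
        (fun n => by
          rcases Nat.eq_zero_or_pos n with h0 | h0
          · simp [h0]
          · exact (div_le_div_iff_of_pos_right (Nat.cast_pos.mpr h0)).mpr (hSle n))
    simpa [div_eq_mul_inv, mul_one_div] using h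
  have hRlim : Tendsto (fun n : ℕ => R ^ (S n * ((1:ℝ)/n))) atTop (𝓝 1) := by
    have hc : ContinuousAt (fun x : ℝ => R ^ x) 0 := Real.continuousAt_const_rpow (ne_of_gt hR0)
    have h2 := hc.tendsto.comp hSlim
    simpa [Function.comp_def, Real.rpow_zero] using h2
  -- pointwise bound on the roots
  have hpt : ∀ α : ℂ, max 1 (‖α‖) ≤
      (1+δ) * ((if 1+δ ≤ ‖α‖ ∧ ‖α‖ < R then R else 1) *
        (if R ≤ ‖α‖ then ‖α‖ else 1)) := by
    intro α
    set x := ‖α‖ with hx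
    have hx0 : 0 ≤ x := norm_nonneg α
    split_ifs with h1 h2 h2
    · linarith [h1.2, h2]
    · have hmx : max 1 x = x := max_eq_right (by linarith [h1.1])
      rw [hmx]; nlinarith [h1.2]
    · have hmx : max 1 x = x := max_eq_right (by linarith)
      rw [hmx]; nlinarith
    · push_neg at h1
      have hxlt : x < 1 + δ := by
        by_contra hcon
        push_neg at hcon
        exact absurd (h1 hcon) (not_le.mpr (lt_of_not_ge h2))
      rw [mul_one, mul_one]
      exact max_le (by linarith) (le_of_lt hxlt)
  -- upper bound on the normalized Mahler measure
  have hub : ∀ n : ℕ, 1 ≤ n → mahlerMeas (P n) ^ ((1:ℝ)/n) ≤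
      |((P n).leadingCoeff : ℝ)| ^ ((1:ℝ)/n) *
        ((1+δ) * (R ^ (S n * ((1:ℝ)/n)) * tailProd (P n) R ^ ((1:ℝ)/n))) := by
    intro n hn
    have hn0 : ((n:ℝ)) ≠ 0 := Nat.cast_ne_zero.mpr (by omega)
    have hstep : mahlerMeas (P n) ≤ |((P n).leadingCoeff : ℝ)| *
        ((1+δ)^(n) * (R ^ (S n) * tailProd (P n) R)) := by
      unfold mahlerMeas tailProd
      apply mul_le_mul_of_nonneg_left ?_ (abs_nonneg _)
      have hb : ((croots (P n)).map (fun α => max 1 (‖α‖))).prod ≤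
          ((croots (P n)).map (fun α => (fun _ : ℂ => (1+δ)) α *
            ((fun α : ℂ => if 1+δ ≤ ‖α‖ ∧ ‖α‖ < R then R else 1) α *
             (fun α : ℂ => if R ≤ ‖α‖ then ‖α‖ else 1) α))).prod :=
        Multiset.prod_map_le_prod_map₀ _ _
          (fun a _ => le_trans zero_le_one (le_max_left _ _)) (fun a _ => hpt a)
      rw [Multiset.prod_map_mul, Multiset.prod_map_mul] at hb
      have hc1 : ((croots (P n)).map (fun _ : ℂ => (1+δ))).prod = (1+δ)^n := by
        rw [Multiset.map_const', Multiset.prod_replicate, hcard n]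
      have hc2 : ((croots (P n)).map
          (fun α : ℂ => if 1+δ ≤ ‖α‖ ∧ ‖α‖ < R then R else 1)).prod
          = R ^ (S n) := by
        rw [show (fun α : ℂ => if 1+δ ≤ ‖α‖ ∧ ‖α‖ < R then R else (1:ℝ))
            = (fun α => R ^ (e α)) from funext fun α => by
          simp only [hedef]; split_ifs <;> simp]
        exact prod_map_rpow R hR0 _ e
      rw [hc1, hc2] at hb
      exact hb
    have htail0 : (0:ℝ) ≤ tailProd (P n) R := by
      unfold tailProd
      apply Multiset.prod_nonneg
      intro x hx
      obtain ⟨a, _, rfl⟩ := Multiset.mem_map.mp hx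
      split_ifs
      · exact norm_nonneg a
      · exact zero_le_one
    have hnn1 : (0:ℝ) ≤ (1+δ)^n := by positivity
    have hnn2 : (0:ℝ) ≤ R ^ (S n) := (Real.rpow_pos_of_pos hR0 _).le
    calc mahlerMeas (P n) ^ ((1:ℝ)/n)
        ≤ (|((P n).leadingCoeff : ℝ)| *
            ((1+δ)^(n) * (R ^ (S n) * tailProd (P n) R))) ^ ((1:ℝ)/n) :=
          Real.rpow_le_rpow (le_trans zero_le_one (hmge n)) hstep (by positivity)
    _ = |((P n).leadingCoeff : ℝ)| ^ ((1:ℝ)/n) *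
          ((1+δ) * (R ^ (S n * ((1:ℝ)/n)) * tailProd (P n) R ^ ((1:ℝ)/n))) := by
        rw [Real.mul_rpow (abs_nonneg _) (by positivity),
            Real.mul_rpow hnn1 (by positivity),
            Real.mul_rpow hnn2 htail0]
        have e1 : ((1+δ)^n : ℝ) ^ ((1:ℝ)/n) = 1+δ := by
          rw [← Real.rpow_natCast (1+δ) n, ← Real.rpow_mul (by positivity),
            mul_one_div, div_self hn0, Real.rpow_one]
        have e2 : (R ^ (S n)) ^ ((1:ℝ)/n) = R ^ (S n * ((1:ℝ)/n)) := by
          rw [← Real.rpow_mul hR0.le]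
        rw [e1, e2]
  -- combine
  have hU : Tendsto (fun n : ℕ => |((P n).leadingCoeff : ℝ)| ^ ((1:ℝ)/n) *
      ((1+δ) * (R ^ (S n * ((1:ℝ)/n)) * tailProd (P n) R ^ ((1:ℝ)/n)))) atTop
      (𝓝 (1 * ((1+δ) * (1*1)))) :=
    hlead.mul (tendsto_const_nhds.mul (hRlim.mul hRt))
  have h1δ : (1:ℝ) * ((1+δ) * (1*1)) = 1+δ := by ring
  rw [h1δ] at hU
  have hev := hU.eventually_lt_const (show (1:ℝ)+δ < 1+ε by rw [hδdef]; linarith)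
  filter_upwards [hev, eventually_ge_atTop 1] with n hn1 hn2
  rw [Real.dist_eq, abs_lt]
  constructor
  · linarith [hge n]
  · have := hub n hn2
    linarith
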